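/- Let G be a compact Hausdorff topological group acting continuously on a Hausdorff space X, and let E be an orbital G-invariant equivalence relation (E = E_H for some subgroup H). Then E is closed in X × X if and only if every E-class is closed in X, and in that case E = E_K for some closed subgroup K ≤ G. -/

import Mathlib

variable {G X : Type*}

def Invariant [Group G] [MulAction G X] (E : X → X → Prop) : Prop :=
  ∀ (g : G) (x₁ x₂ : X), E x₁ x₂ ↔ E (g • x₁) (g • x₂)

def orbRel [Group G] [MulAction G X] (H : Subgroup G) (x₁ x₂ : X) : Prop :=
  ∃ h ∈ H, h • x₁ = x₂

def RRel [Group G] [MulAction G X] (H : Subgroup G) (Xt : Set X) (x₁ x₂ : X) : Prop :=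
  ∃ g : G, ∃ h ∈ H, g • x₁ = h • (g • x₂) ∧ g • x₁ ∈ Xt

private lemma graph_closed [Group G] [TopologicalSpace G] [IsTopologicalGroup G] [CompactSpace G]
    [TopologicalSpace X] [T2Space X] [MulAction G X] [ContinuousSMul G X]
    (K : Subgroup G) (hK : IsClosed (K : Set G)) :
    IsClosed {p : X × X | orbRel K p.1 p.2} := by
  have hS : IsClosed {q : G × (X × X) | q.1 ∈ K ∧ q.1 • q.2.1 = q.2.2} := by
    apply IsClosed.inter
    · exact hK.preimage continuous_fst
    · exact isClosed_eq (continuous_fst.smul (continuous_fst.comp continuous_snd))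
        (continuous_snd.comp continuous_snd)
  have himg : {p : X × X | orbRel K p.1 p.2} =
      Prod.snd '' {q : G × (X × X) | q.1 ∈ K ∧ q.1 • q.2.1 = q.2.2} := by
    ext p
    constructor
    · rintro ⟨h, hh, hhx⟩; exact ⟨(h, p), ⟨hh, hhx⟩, rfl⟩
    · rintro ⟨⟨g, q⟩, ⟨hg, hgx⟩, rfl⟩; exact ⟨g, hg, hgx⟩
  rw [himg]
  exact isClosedMap_snd_of_compactSpace _ hS

theorem stmt19 [Group G] [TopologicalSpace G] [IsTopologicalGroup G] [CompactSpace G] [T2Space G]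
    [TopologicalSpace X] [T2Space X] [MulAction G X] [ContinuousSMul G X]
    (E : X → X → Prop) (hEq : Equivalence E) (hInv : Invariant (G := G) E)
    (H : Subgroup G) (hOrb : E = orbRel H) :
    (IsClosed {p : X × X | E p.1 p.2} ↔ ∀ x : X, IsClosed {y : X | E x y}) ∧
    ((∀ x : X, IsClosed {y : X | E x y}) →
      ∃ K : Subgroup G, IsClosed (K : Set G) ∧ E = orbRel K) := by
  -- key: if classes are closed then E = orbRel (closure H)
  have key : (∀ x : X, IsClosed {y : X | E x y}) →
      ∃ K : Subgroup G, IsClosed (K : Set G) ∧ E = orbRel K := by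
    intro hcl
    refine ⟨H.topologicalClosure, H.isClosed_topologicalClosure, ?_⟩
    funext x y
    apply propext
    constructor
    · intro hxy
      rw [hOrb] at hxy
      obtain ⟨h, hh, hhx⟩ := hxy
      exact ⟨h, H.le_topologicalClosure hh, hhx⟩
    · rintro ⟨k, hk, hkx⟩
      have hf : Continuous fun g : G => g • x := continuous_id.smul continuous_const
      have h1 : k • x ∈ closure ((fun g : G => g • x) '' (H : Set G)) :=
        (image_closure_subset_closure_image hf) ⟨k, hk, rfl⟩
      have h2 : (fun g : G => g • x) '' (H : Set G) ⊆ {y : X | E x y} := by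
        rintro _ ⟨h, hh, rfl⟩
        rw [hOrb]
        exact ⟨h, hh, rfl⟩
      have h3 : closure ((fun g : G => g • x) '' (H : Set G)) ⊆ {y : X | E x y} :=
        (hcl x).closure_subset_iff.mpr h2
      rw [← hkx]
      exact h3 h1
  constructor
  · constructor
    · intro hclosed x
      have : {y : X | E x y} = (fun y => (x, y)) ⁻¹' {p : X × X | E p.1 p.2} := rfl
      rw [this]
      exact hclosed.preimage (Continuous.prodMk_right x)
    · intro hcl
      obtain ⟨K, hKc, hEK⟩ := key hcl
      rw [hEK]
      exact graph_closed K hKc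
  · exact key
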